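/- Let b:[0,1]→(0,∞) be twice continuously differentiable with b(0) ≠ b(1), and define G:[0,1]→ℝ by G(z) = (log b(z) − log b(0)) / (log b(1) − log b(0)). Then G is an exposure curve (twice continuously differentiable, non-decreasing, concave, G(0)=0, G(1)=1, G'(0)>0) if and only if one of the following two conditions holds: (i) b'(0) > 0, b'(z) ≥ 0 for all z ∈ [0,1], and b''(z)b(z) − b'(z)² ≤ 0 for all z ∈ [0,1]; or (ii) b'(0) < 0, b'(z) ≤ 0 for all z ∈ [0,1], and b''(z)b(z) − b'(z)² ≥ 0 for all z ∈ [0,1]. -/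

import Mathlib

open Set Filter Topology

/-- An exposure curve: a function `G : [0,1] → ℝ` that is twice continuously
differentiable (with continuous second derivative on `[0,1]`), non-decreasing,
concave, with `G 0 = 0`, `G 1 = 1` and `G' 0 > 0`. -/
def IsExposureCurve (G : ℝ → ℝ) : Prop :=
  MonotoneOn G (Set.Icc 0 1) ∧ ConcaveOn ℝ (Set.Icc 0 1) G ∧
  G 0 = 0 ∧ G 1 = 1 ∧
  ∃ G' G'' : ℝ → ℝ,
    (∀ z ∈ Set.Icc (0:ℝ) 1, HasDerivWithinAt G (G' z) (Set.Icc 0 1) z) ∧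
    (∀ z ∈ Set.Icc (0:ℝ) 1, HasDerivWithinAt G' (G'' z) (Set.Icc 0 1) z) ∧
    ContinuousOn G'' (Set.Icc 0 1) ∧ 0 < G' 0

lemma aux_neBot {x : ℝ} (hx : x ∈ Set.Icc (0:ℝ) 1) :
    (𝓝[Set.Icc (0:ℝ) 1 \ {x}] x).NeBot := by
  rcases lt_or_eq_of_le hx.2 with h1 | h1
  · refine (left_nhdsWithin_Ioo_neBot h1).mono (nhdsWithin_mono _ ?_)
    intro y hy
    exact ⟨⟨hx.1.trans hy.1.le, hy.2.le⟩, (ne_of_gt hy.1)⟩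
  · subst h1
    refine (right_nhdsWithin_Ioo_neBot (zero_lt_one)).mono (nhdsWithin_mono _ ?_)
    intro y hy
    exact ⟨⟨hy.1.le, hy.2.le⟩, (ne_of_lt hy.2)⟩

lemma aux_deriv_nonneg {f f' : ℝ → ℝ} (hf : MonotoneOn f (Set.Icc 0 1)) {x : ℝ}
    (hx : x ∈ Set.Icc (0:ℝ) 1) (hd : HasDerivWithinAt f (f' x) (Set.Icc 0 1) x) :
    0 ≤ f' x := by
  rw [hasDerivWithinAt_iff_tendsto_slope] at hd
  have := aux_neBot hx
  refine ge_of_tendsto hd ?_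
  filter_upwards [self_mem_nhdsWithin] with y hy
  rw [slope_def_field]
  rcases lt_or_gt_of_ne hy.2 with h | h
  · exact div_nonneg_iff.mpr (Or.inr ⟨sub_nonpos.2 (hf hy.1 hx h.le), by linarith⟩)
  · exact div_nonneg (sub_nonneg.2 (hf hx hy.1 h.le)) (by linarith)

lemma aux_build {G g' g'' : ℝ → ℝ}
    (hG' : ∀ z ∈ Set.Icc (0:ℝ) 1, HasDerivWithinAt G (g' z) (Set.Icc 0 1) z)
    (hG'' : ∀ z ∈ Set.Icc (0:ℝ) 1, HasDerivWithinAt g' (g'' z) (Set.Icc 0 1) z)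
    (hc : ContinuousOn g'' (Set.Icc 0 1))
    (h0 : G 0 = 0) (h1 : G 1 = 1) (hg'0 : 0 < g' 0)
    (hg' : ∀ z ∈ Set.Icc (0:ℝ) 1, 0 ≤ g' z)
    (hg'' : ∀ z ∈ Set.Icc (0:ℝ) 1, g'' z ≤ 0) :
    IsExposureCurve G := by
  have hGc : ContinuousOn G (Set.Icc 0 1) := fun z hz => (hG' z hz).continuousWithinAt
  have hg'c : ContinuousOn g' (Set.Icc 0 1) := fun z hz => (hG'' z hz).continuousWithinAt
  have hmono : MonotoneOn G (Set.Icc 0 1) :=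
    monotoneOn_of_hasDerivWithinAt_nonneg (convex_Icc 0 1) hGc
      (fun x hx => ((hG' x (interior_subset hx)).mono interior_subset))
      (fun x hx => hg' x (interior_subset hx))
  have hanti : AntitoneOn g' (Set.Icc 0 1) := by
    have hm : MonotoneOn (fun z => -g' z) (Set.Icc 0 1) :=
      monotoneOn_of_hasDerivWithinAt_nonneg (f' := fun z => -g'' z) (convex_Icc 0 1) hg'c.neg
        (fun x hx => ((hG'' x (interior_subset hx)).neg.mono interior_subset))
        (fun x hx => neg_nonneg.2 (hg'' x (interior_subset hx)))
    intro x hx y hy hxy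
    have := hm hx hy hxy
    dsimp only at this
    linarith
  have hconc : ConcaveOn ℝ (Set.Icc 0 1) G := by
    apply AntitoneOn.concaveOn_of_deriv (convex_Icc 0 1) hGc
    · intro x hx
      rw [interior_Icc] at hx
      exact (((hG' x (Ioo_subset_Icc_self hx)).hasDerivAt
        (Icc_mem_nhds hx.1 hx.2)).differentiableAt).differentiableWithinAt
    · intro x hx y hy hxy
      rw [interior_Icc] at hx hy
      rw [((hG' x (Ioo_subset_Icc_self hx)).hasDerivAt (Icc_mem_nhds hx.1 hx.2)).deriv,
          ((hG' y (Ioo_subset_Icc_self hy)).hasDerivAt (Icc_mem_nhds hy.1 hy.2)).deriv]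
      exact hanti (Ioo_subset_Icc_self hx) (Ioo_subset_Icc_self hy) hxy
  exact ⟨hmono, hconc, h0, h1, g', g'', hG', hG'', hc, hg'0⟩

lemma aux_extract {G g' g'' : ℝ → ℝ}
    (hG' : ∀ z ∈ Set.Icc (0:ℝ) 1, HasDerivWithinAt G (g' z) (Set.Icc 0 1) z)
    (hG'' : ∀ z ∈ Set.Icc (0:ℝ) 1, HasDerivWithinAt g' (g'' z) (Set.Icc 0 1) z)
    (h : IsExposureCurve G) :
    0 < g' 0 ∧ (∀ z ∈ Set.Icc (0:ℝ) 1, 0 ≤ g' z) ∧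
      (∀ z ∈ Set.Icc (0:ℝ) 1, g'' z ≤ 0) := by
  obtain ⟨hmono, hconc, h0, h1, G1, G2, hG1, hG2, hG2c, hpos⟩ := h
  have hud := uniqueDiffOn_Icc (zero_lt_one (α := ℝ))
  have hEq : ∀ z ∈ Set.Icc (0:ℝ) 1, G1 z = g' z := fun z hz => by
    rw [← (hG1 z hz).derivWithin (hud z hz), ← (hG' z hz).derivWithin (hud z hz)]
  have hg'0 : 0 < g' 0 := hEq 0 ⟨le_refl 0, zero_le_one⟩ ▸ hpos
  have hg'nn : ∀ z ∈ Set.Icc (0:ℝ) 1, 0 ≤ g' z := fun z hz =>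
    aux_deriv_nonneg hmono hz (hG' z hz)
  refine ⟨hg'0, hg'nn, fun z hz => ?_⟩
  have hanti : AntitoneOn g' (Set.Icc 0 1) := by
    have ha := hconc.antitoneOn_derivWithin (fun x hx => (hG' x hx).differentiableWithinAt)
    intro x hx y hy hxy
    have := ha hx hy hxy
    rwa [(hG' x hx).derivWithin (hud x hx), (hG' y hy).derivWithin (hud y hy)] at this
  have hneg := aux_deriv_nonneg (f := fun z => -g' z) (f' := fun z => -g'' z)
    (fun x hx y hy hxy => neg_le_neg (hanti hx hy hxy)) hz ((hG'' z hz).neg)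
  linarith

theorem statement10 (b b' b'' : ℝ → ℝ)
    (hbpos : ∀ z ∈ Set.Icc (0:ℝ) 1, 0 < b z)
    (hd1 : ∀ z ∈ Set.Icc (0:ℝ) 1, HasDerivWithinAt b (b' z) (Set.Icc 0 1) z)
    (hd2 : ∀ z ∈ Set.Icc (0:ℝ) 1, HasDerivWithinAt b' (b'' z) (Set.Icc 0 1) z)
    (hcont : ContinuousOn b'' (Set.Icc 0 1))
    (hne : b 0 ≠ b 1) :
    IsExposureCurve
        (fun z => (Real.log (b z) - Real.log (b 0)) / (Real.log (b 1) - Real.log (b 0)))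
      ↔ ((0 < b' 0 ∧ (∀ z ∈ Set.Icc (0:ℝ) 1, 0 ≤ b' z) ∧
            (∀ z ∈ Set.Icc (0:ℝ) 1, b'' z * b z - (b' z) ^ 2 ≤ 0)) ∨
         (b' 0 < 0 ∧ (∀ z ∈ Set.Icc (0:ℝ) 1, b' z ≤ 0) ∧
            (∀ z ∈ Set.Icc (0:ℝ) 1, 0 ≤ b'' z * b z - (b' z) ^ 2))) := by
  have hmem0 : (0:ℝ) ∈ Set.Icc (0:ℝ) 1 := ⟨le_refl 0, zero_le_one⟩
  have hmem1 : (1:ℝ) ∈ Set.Icc (0:ℝ) 1 := ⟨zero_le_one, le_refl 1⟩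
  have hb0 := hbpos 0 hmem0
  have hb1 := hbpos 1 hmem1
  set D := Real.log (b 1) - Real.log (b 0) with hDdef
  have hD : D ≠ 0 := by
    intro h
    apply hne
    have hlog : Real.log (b 0) = Real.log (b 1) := by
      have := sub_eq_zero.mp h; linarith
    rw [← Real.exp_log hb0, ← Real.exp_log hb1, hlog]
  set g' : ℝ → ℝ := fun z => b' z / (b z * D) with hg'def
  set g'' : ℝ → ℝ := fun z => (b'' z * b z - (b' z) ^ 2) / ((b z) ^ 2 * D) with hg''def
  have hG' : ∀ z ∈ Set.Icc (0:ℝ) 1, HasDerivWithinAt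
      (fun z => (Real.log (b z) - Real.log (b 0)) / D) (g' z) (Set.Icc 0 1) z := by
    intro z hz
    have h : HasDerivWithinAt (fun z => (Real.log (b z) - Real.log (b 0)) / D)
        (b' z / b z / D) (Set.Icc 0 1) z :=
      (((hd1 z hz).log (hbpos z hz).ne').sub_const (Real.log (b 0))).div_const D
    convert h using 1
    show b' z / (b z * D) = b' z / b z / D
    rw [div_div]
  have hG'' : ∀ z ∈ Set.Icc (0:ℝ) 1, HasDerivWithinAt g' (g'' z) (Set.Icc 0 1) z := by
    intro z hz
    have hbz : b z ≠ 0 := (hbpos z hz).ne'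
    have h : HasDerivWithinAt g'
        ((b'' z * (b z * D) - b' z * (b' z * D)) / (b z * D) ^ 2) (Set.Icc 0 1) z :=
      (hd2 z hz).div ((hd1 z hz).mul_const D) (mul_ne_zero hbz hD)
    convert h using 1
    show (b'' z * b z - (b' z) ^ 2) / ((b z) ^ 2 * D)
      = (b'' z * (b z * D) - b' z * (b' z * D)) / (b z * D) ^ 2
    field_simp
  have hcont'' : ContinuousOn g'' (Set.Icc 0 1) := by
    have hbc : ContinuousOn b (Set.Icc 0 1) := fun z hz => (hd1 z hz).continuousWithinAt
    have hb'c : ContinuousOn b' (Set.Icc 0 1) := fun z hz => (hd2 z hz).continuousWithinAt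
    apply ContinuousOn.div
    · exact (hcont.mul hbc).sub (hb'c.pow 2)
    · exact (hbc.pow 2).mul continuousOn_const
    · intro z hz
      exact mul_ne_zero (pow_ne_zero 2 (hbpos z hz).ne') hD
  constructor
  · intro h
    obtain ⟨hg'0, hg'nn, hg''np⟩ := aux_extract hG' hG'' h
    rcases hD.lt_or_gt with hDneg | hDpos
    · right
      refine ⟨?_, ?_, ?_⟩
      · by_contra hc'
        push_neg at hc'
        have hbD : b 0 * D < 0 := mul_neg_of_pos_of_neg hb0 hDneg
        have hle : b' 0 / (b 0 * D) ≤ 0 := div_nonpos_iff.mpr (Or.inl ⟨hc', hbD.le⟩)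
        have : g' 0 ≤ 0 := hle
        linarith
      · intro z hz
        by_contra hc'
        push_neg at hc'
        have hbD : b z * D < 0 := mul_neg_of_pos_of_neg (hbpos z hz) hDneg
        have hlt : b' z / (b z * D) < 0 := div_neg_of_pos_of_neg hc' hbD
        have h2 : (0:ℝ) ≤ b' z / (b z * D) := hg'nn z hz
        linarith
      · intro z hz
        by_contra hc'
        push_neg at hc'
        have hbD : (b z) ^ 2 * D < 0 := mul_neg_of_pos_of_neg (pow_pos (hbpos z hz) 2) hDneg
        have hlt : 0 < (b'' z * b z - (b' z) ^ 2) / ((b z) ^ 2 * D) :=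
          div_pos_of_neg_of_neg hc' hbD
        have h2 : (b'' z * b z - (b' z) ^ 2) / ((b z) ^ 2 * D) ≤ 0 := hg''np z hz
        linarith
    · left
      refine ⟨?_, ?_, ?_⟩
      · by_contra hc'
        push_neg at hc'
        have hbD : 0 < b 0 * D := mul_pos hb0 hDpos
        have hle : b' 0 / (b 0 * D) ≤ 0 := div_nonpos_iff.mpr (Or.inr ⟨hc', hbD.le⟩)
        have : g' 0 ≤ 0 := hle
        linarith
      · intro z hz
        by_contra hc'
        push_neg at hc'
        have hbD : 0 < b z * D := mul_pos (hbpos z hz) hDpos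
        have hlt : b' z / (b z * D) < 0 := div_neg_of_neg_of_pos hc' hbD
        have h2 : (0:ℝ) ≤ b' z / (b z * D) := hg'nn z hz
        linarith
      · intro z hz
        by_contra hc'
        push_neg at hc'
        have hbD : 0 < (b z) ^ 2 * D := mul_pos (pow_pos (hbpos z hz) 2) hDpos
        have hlt : 0 < (b'' z * b z - (b' z) ^ 2) / ((b z) ^ 2 * D) := div_pos hc' hbD
        have h2 : (b'' z * b z - (b' z) ^ 2) / ((b z) ^ 2 * D) ≤ 0 := hg''np z hz
        linarith
  · intro h
    have h00 : (Real.log (b 0) - Real.log (b 0)) / D = 0 := by simp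
    rcases h with ⟨hb'0, hb'nn, hnum⟩ | ⟨hb'0, hb'np, hnum⟩
    · have hmonob : MonotoneOn b (Set.Icc 0 1) :=
        monotoneOn_of_hasDerivWithinAt_nonneg (convex_Icc 0 1)
          (fun z hz => (hd1 z hz).continuousWithinAt)
          (fun x hx => (hd1 x (interior_subset hx)).mono interior_subset)
          (fun x hx => hb'nn x (interior_subset hx))
      have hlt : b 0 < b 1 := lt_of_le_of_ne (hmonob hmem0 hmem1 zero_le_one) hne
      have hDpos : 0 < D := sub_pos.mpr (Real.log_lt_log hb0 hlt)
      refine aux_build hG' hG'' hcont'' h00 (div_self hD) ?_ ?_ ?_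
      · exact div_pos hb'0 (mul_pos hb0 hDpos)
      · intro z hz
        exact div_nonneg (hb'nn z hz) (mul_pos (hbpos z hz) hDpos).le
      · intro z hz
        exact div_nonpos_iff.mpr
          (Or.inr ⟨hnum z hz, (mul_pos (pow_pos (hbpos z hz) 2) hDpos).le⟩)
    · have hmonob : MonotoneOn (fun z => -b z) (Set.Icc 0 1) :=
        monotoneOn_of_hasDerivWithinAt_nonneg (f' := fun z => -b' z) (convex_Icc 0 1)
          (fun z hz => ((hd1 z hz).continuousWithinAt.neg))
          (fun x hx => ((hd1 x (interior_subset hx)).neg.mono interior_subset))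
          (fun x hx => neg_nonneg.2 (hb'np x (interior_subset hx)))
      have hlt : b 1 < b 0 := by
        have := hmonob hmem0 hmem1 zero_le_one
        dsimp only at this
        rcases lt_or_eq_of_le (by linarith : b 1 ≤ b 0) with h' | h'
        · exact h'
        · exact absurd h'.symm hne
      have hDneg : D < 0 := sub_neg.mpr (Real.log_lt_log hb1 hlt)
      refine aux_build hG' hG'' hcont'' h00 (div_self hD) ?_ ?_ ?_
      · exact div_pos_of_neg_of_neg hb'0 (mul_neg_of_pos_of_neg hb0 hDneg)
      · intro z hz
        exact div_nonneg_iff.mpr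
          (Or.inr ⟨hb'np z hz, (mul_neg_of_pos_of_neg (hbpos z hz) hDneg).le⟩)
      · intro z hz
        exact div_nonpos_iff.mpr
          (Or.inl ⟨hnum z hz, (mul_neg_of_pos_of_neg (pow_pos (hbpos z hz) 2) hDneg).le⟩)
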